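/- Let 1 < r, r₁ < ∞ with 1/r > 1/r₁, define r₂ by 1/r₂ := 1/r − 1/r₁, and let r′, r₂′ denote conjugate exponents. Let ε > 0 and let φ : ℝ → ℝ be measurable. Then there exists a constant c > 0, depending only on r, r₁ and ε (in particular independent of φ), such that for every measurable function w : ℝ² → [0, ∞], (∫_ℝ (∫_ℝ w(ξ, τ) dτ)^{r₂′} dξ)^{1/r₂′} ≤ c · (∫∫_{ℝ²} ⟨ξ⟩^{(1/r₁ + ε) r′} ⟨τ + φ(ξ)⟩^{(1/r + ε) r′} w(ξ, τ)^{r′} dξ dτ)^{1/r′}, all quantities understood in [0, ∞]. -/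

import Mathlib

open MeasureTheory
open scoped ENNReal

/-- Japanese bracket ⟨x⟩ = (1 + x²)^{1/2}. -/
noncomputable def jap (x : ℝ) : ℝ := Real.sqrt (1 + x ^ 2)

lemma jap_pos (x : ℝ) : 0 < jap x := Real.sqrt_pos.mpr (by positivity)

lemma jap_rpow (x t : ℝ) : jap x ^ t = (1 + x ^ 2) ^ (t / 2) := by
  rw [jap, Real.sqrt_eq_rpow, ← Real.rpow_mul (by positivity)]
  congr 1; ring

lemma ofReal_jap_rpow (x a b : ℝ) :
    ENNReal.ofReal (jap x ^ a) ^ b = ENNReal.ofReal (jap x ^ (a * b)) := by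
  rw [ENNReal.ofReal_rpow_of_pos (Real.rpow_pos_of_pos (jap_pos x) a),
    ← Real.rpow_mul (jap_pos x).le]

lemma ofReal_jap_mul (x a b : ℝ) :
    ENNReal.ofReal (jap x ^ a) * ENNReal.ofReal (jap x ^ b)
      = ENNReal.ofReal (jap x ^ (a + b)) := by
  rw [← ENNReal.ofReal_mul (Real.rpow_pos_of_pos (jap_pos x) a).le,
    ← Real.rpow_add (jap_pos x)]

lemma meas_jap : Measurable jap := by
  apply Measurable.sqrt; fun_prop

lemma fin_int {t : ℝ} (ht : 1 < t) :
    (∫⁻ x : ℝ, ENNReal.ofReal (jap x ^ (-t))) < ⊤ := by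
  have hInt : Integrable (fun x : ℝ => (1 + x ^ 2) ^ (-t / 2)) := by
    have h := integrable_rpow_neg_one_add_norm_sq (E := ℝ) (μ := volume) (r := t)
      (by simpa using ht)
    simpa [Real.norm_eq_abs, sq_abs] using h
  calc (∫⁻ x : ℝ, ENNReal.ofReal (jap x ^ (-t)))
      = ∫⁻ x : ℝ, ‖(1 + x ^ 2) ^ (-t / 2)‖₊ := by
        refine lintegral_congr fun x => ?_
        rw [jap_rpow, ← Real.enorm_eq_ofReal (by positivity), enorm_eq_nnnorm]
    _ < ⊤ := hInt.2

lemma pos_int (t : ℝ) : 0 < ∫⁻ x : ℝ, ENNReal.ofReal (jap x ^ t) := by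
  rw [lintegral_pos_iff_support (by exact (meas_jap.pow_const t).ennreal_ofReal)]
  have hs : Function.support (fun x : ℝ => ENNReal.ofReal (jap x ^ t)) = Set.univ := by
    ext x
    simp only [Function.mem_support, ne_eq, ENNReal.ofReal_eq_zero, not_le, Set.mem_univ,
      iff_true]
    exact Real.rpow_pos_of_pos (jap_pos x) t
  rw [hs]
  simp [Real.volume_univ]

/-- Embedding (2.6), Fourier-side:
(∫_ξ (∫_τ w dτ)^{r₂′} dξ)^{1/r₂′} ≤ c (∫∫ ⟨ξ⟩^{(1/r₁+ε)r′} ⟨τ+φ(ξ)⟩^{(1/r+ε)r′} w^{r′})^{1/r′},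
where 1/r₂ = 1/r − 1/r₁, with c independent of φ. -/
theorem stmt_10 (r r₁ r₂ r' r₂' ε : ℝ)
    (hr : 1 < r) (hr₁ : 1 < r₁) (h : 1 / r > 1 / r₁) (hr₂ : 1 / r₂ = 1 / r - 1 / r₁)
    (hr' : 1 / r + 1 / r' = 1) (hr₂' : 1 / r₂ + 1 / r₂' = 1) (hε : 0 < ε) :
    ∃ c : ℝ, 0 < c ∧ ∀ φ : ℝ → ℝ, Measurable φ → ∀ w : ℝ × ℝ → ENNReal, Measurable w →
      (∫⁻ ξ : ℝ, (∫⁻ τ : ℝ, w (ξ, τ)) ^ r₂') ^ (1 / r₂') ≤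
        ENNReal.ofReal c *
          (∫⁻ q : ℝ × ℝ,
            ENNReal.ofReal (jap q.1 ^ ((1 / r₁ + ε) * r') *
              jap (q.2 + φ q.1) ^ ((1 / r + ε) * r')) * w q ^ r') ^ (1 / r') := by
  -- basic exponent arithmetic
  have hr0 : 0 < r := by linarith
  have hr₁0 : 0 < r₁ := by linarith
  have hir : 0 < 1 / r := by positivity
  have hir₁ : 0 < 1 / r₁ := by positivity
  have hir1 : 1 / r < 1 := by rw [div_lt_one hr0]; exact hr
  have hir' : 0 < 1 / r' := by linarith
  have hr'0 : 0 < r' := one_div_pos.mp hir'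
  have hir₂' : 1 / r₂' = 1 / r₁ + 1 / r' := by linarith
  have hir₂'pos : 0 < 1 / r₂' := by rw [hir₂']; linarith
  have hr₂'0 : 0 < r₂' := one_div_pos.mp hir₂'pos
  have hr₂'lt : r₂' < r₁ := by
    refine lt_of_one_div_lt_one_div hr₁0 ?_
    rw [hir₂']; linarith
  have hconj : Real.HolderConjugate r r' := Real.holderConjugate_iff.mpr ⟨hr, by simpa [one_div] using hr'⟩
  -- the two weight integrals
  have hsA : 1 < (1 / r + ε) * r := by
    have h1 : 1 / r * r = 1 := one_div_mul_cancel hr0.ne'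
    nlinarith
  have hsB : 1 < (1 / r₁ + ε) * r₁ := by
    have h1 : 1 / r₁ * r₁ = 1 := one_div_mul_cancel hr₁0.ne'
    nlinarith
  set A : ℝ≥0∞ := ∫⁻ τ : ℝ, ENNReal.ofReal (jap τ ^ (-((1 / r + ε) * r))) with hA_def
  set B : ℝ≥0∞ := ∫⁻ ξ : ℝ, ENNReal.ofReal (jap ξ ^ (-((1 / r₁ + ε) * r₁))) with hB_def
  have hA_lt : A < ⊤ := fin_int hsA
  have hB_lt : B < ⊤ := fin_int hsB
  have hA_pos : 0 < A := by
    have := pos_int (-((1 / r + ε) * r)); rwa [hA_def]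
  have hB_pos : 0 < B := by
    have := pos_int (-((1 / r₁ + ε) * r₁)); rwa [hB_def]
  set a : ℝ≥0∞ := A ^ (1 / r) with ha_def
  set b : ℝ≥0∞ := B ^ (1 / r₁) with hb_def
  have ha_ne_top : a ≠ ⊤ := ENNReal.rpow_ne_top_of_nonneg hir.le hA_lt.ne
  have hb_ne_top : b ≠ ⊤ := ENNReal.rpow_ne_top_of_nonneg hir₁.le hB_lt.ne
  have ha_pos : 0 < a := ENNReal.rpow_pos hA_pos hA_lt.ne
  have hb_pos : 0 < b := ENNReal.rpow_pos hB_pos hB_lt.ne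
  refine ⟨(a * b).toReal, ENNReal.toReal_pos (ENNReal.mul_pos ha_pos.ne' hb_pos.ne').ne'
    (ENNReal.mul_ne_top ha_ne_top hb_ne_top), ?_⟩
  have hofc : ENNReal.ofReal (a * b).toReal = a * b :=
    ENNReal.ofReal_toReal (ENNReal.mul_ne_top ha_ne_top hb_ne_top)
  intro φ hφ w hw
  -- the full integrand on the product space
  set F : ℝ × ℝ → ℝ≥0∞ := fun q =>
    ENNReal.ofReal (jap q.1 ^ ((1 / r₁ + ε) * r') *
      jap (q.2 + φ q.1) ^ ((1 / r + ε) * r')) * w q ^ r' with hF_def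
  have hF : Measurable F := by
    refine Measurable.mul ?_ (hw.pow_const r')
    exact (((meas_jap.comp measurable_fst).pow_const _).mul
      ((meas_jap.comp (measurable_snd.add (hφ.comp measurable_fst))).pow_const _)).ennreal_ofReal
  set K : ℝ → ℝ≥0∞ := fun ξ => ∫⁻ τ : ℝ, F (ξ, τ) with hK_def
  have hK : Measurable K := hF.lintegral_prod_right'
  set P : ℝ → ℝ≥0∞ := fun ξ => ENNReal.ofReal (jap ξ ^ (-(1 / r₁ + ε))) with hP_def
  have hP : Measurable P := (meas_jap.pow_const _).ennreal_ofReal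
  -- Step 1 : Hölder in τ for fixed ξ
  have hstep1 : ∀ ξ : ℝ, (∫⁻ τ : ℝ, w (ξ, τ)) ≤
      a * (∫⁻ τ : ℝ, ENNReal.ofReal (jap (τ + φ ξ) ^ ((1 / r + ε) * r')) * w (ξ, τ) ^ r')
        ^ (1 / r') := by
    intro ξ
    have hfm : Measurable fun τ : ℝ => ENNReal.ofReal (jap (τ + φ ξ) ^ (-(1 / r + ε))) :=
      ((meas_jap.comp (measurable_id.add_const _)).pow_const _).ennreal_ofReal
    have hgm : Measurable fun τ : ℝ =>
        ENNReal.ofReal (jap (τ + φ ξ) ^ (1 / r + ε)) * w (ξ, τ) :=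
      (((meas_jap.comp (measurable_id.add_const _)).pow_const _).ennreal_ofReal).mul
        (hw.comp measurable_prodMk_left)
    have h2 := ENNReal.lintegral_mul_le_Lp_mul_Lq volume hconj hfm.aemeasurable hgm.aemeasurable
    have h1 : (∫⁻ τ : ℝ, w (ξ, τ)) = ∫⁻ τ : ℝ,
        ((fun τ : ℝ => ENNReal.ofReal (jap (τ + φ ξ) ^ (-(1 / r + ε)))) *
         (fun τ : ℝ => ENNReal.ofReal (jap (τ + φ ξ) ^ (1 / r + ε)) * w (ξ, τ))) τ := by
      refine lintegral_congr fun τ => ?_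
      simp only [Pi.mul_apply]
      rw [← mul_assoc, ofReal_jap_mul, neg_add_cancel, Real.rpow_zero, ENNReal.ofReal_one,
        one_mul]
    have h3 : (∫⁻ τ : ℝ, ENNReal.ofReal (jap (τ + φ ξ) ^ (-(1 / r + ε))) ^ r) = A := by
      have hpt : ∀ τ : ℝ, ENNReal.ofReal (jap (τ + φ ξ) ^ (-(1 / r + ε))) ^ r =
          ENNReal.ofReal (jap (τ + φ ξ) ^ (-((1 / r + ε) * r))) := fun τ => by
        rw [ofReal_jap_rpow, neg_mul]
      rw [lintegral_congr hpt, hA_def]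
      exact lintegral_add_right_eq_self
        (fun τ : ℝ => ENNReal.ofReal (jap τ ^ (-((1 / r + ε) * r)))) (φ ξ)
    have h4 : (∫⁻ τ : ℝ, (ENNReal.ofReal (jap (τ + φ ξ) ^ (1 / r + ε)) * w (ξ, τ)) ^ r') =
        ∫⁻ τ : ℝ, ENNReal.ofReal (jap (τ + φ ξ) ^ ((1 / r + ε) * r')) * w (ξ, τ) ^ r' := by
      refine lintegral_congr fun τ => ?_
      rw [ENNReal.mul_rpow_of_nonneg _ _ hr'0.le, ofReal_jap_rpow]
    calc (∫⁻ τ : ℝ, w (ξ, τ)) = _ := h1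
      _ ≤ _ := h2
      _ = a * (∫⁻ τ : ℝ, ENNReal.ofReal (jap (τ + φ ξ) ^ ((1 / r + ε) * r')) * w (ξ, τ) ^ r')
          ^ (1 / r') := by rw [h3, h4, ha_def]
  -- rewriting the inner Hölder bound through P and K
  have hPQ : ∀ ξ : ℝ,
      (∫⁻ τ : ℝ, ENNReal.ofReal (jap (τ + φ ξ) ^ ((1 / r + ε) * r')) * w (ξ, τ) ^ r')
        ^ (1 / r') = P ξ * K ξ ^ (1 / r') := by
    intro ξ
    have hKe : K ξ = ENNReal.ofReal (jap ξ ^ ((1 / r₁ + ε) * r')) *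
        ∫⁻ τ : ℝ, ENNReal.ofReal (jap (τ + φ ξ) ^ ((1 / r + ε) * r')) * w (ξ, τ) ^ r' := by
      simp only [hK_def]
      rw [← lintegral_const_mul' _ _ ENNReal.ofReal_ne_top]
      refine lintegral_congr fun τ => ?_
      simp only [hF_def]
      rw [ENNReal.ofReal_mul (Real.rpow_pos_of_pos (jap_pos ξ) _).le, mul_assoc]
    have he : -(1 / r₁ + ε) + (1 / r₁ + ε) * r' * (1 / r') = 0 := by
      rw [mul_assoc, mul_one_div_cancel hr'0.ne', mul_one, neg_add_cancel]
    rw [hKe, ENNReal.mul_rpow_of_nonneg _ _ hir'.le, ofReal_jap_rpow, ← mul_assoc]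
    simp only [hP_def]
    rw [ofReal_jap_mul, he, Real.rpow_zero, ENNReal.ofReal_one, one_mul]
  -- main chain
  calc (∫⁻ ξ : ℝ, (∫⁻ τ : ℝ, w (ξ, τ)) ^ r₂') ^ (1 / r₂')
      ≤ (∫⁻ ξ : ℝ, (a * (P ξ * K ξ ^ (1 / r'))) ^ r₂') ^ (1 / r₂') := by
        refine ENNReal.rpow_le_rpow (lintegral_mono fun ξ => ?_) hir₂'pos.le
        refine ENNReal.rpow_le_rpow ?_ hr₂'0.le
        rw [← hPQ ξ]
        exact hstep1 ξ
    _ = a * (∫⁻ ξ : ℝ, (P ξ * K ξ ^ (1 / r')) ^ r₂') ^ (1 / r₂') := by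
        rw [lintegral_congr fun ξ => ENNReal.mul_rpow_of_nonneg a _ hr₂'0.le,
          lintegral_const_mul' _ _ (ENNReal.rpow_ne_top_of_nonneg hr₂'0.le ha_ne_top),
          ENNReal.mul_rpow_of_nonneg _ _ hir₂'pos.le, ← ENNReal.rpow_mul,
          mul_one_div_cancel hr₂'0.ne', ENNReal.rpow_one]
    _ ≤ a * ((∫⁻ ξ : ℝ, P ξ ^ r₁) ^ (1 / r₁) * (∫⁻ ξ : ℝ, (K ξ ^ (1 / r')) ^ r') ^ (1 / r')) := by
        refine mul_le_mul_right ?_ a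
        have hh := ENNReal.lintegral_Lp_mul_le_Lq_mul_Lr (p := r₂') (q := r₁) (r := r')
          hr₂'0 hr₂'lt (by rw [hir₂']) volume hP.aemeasurable
          (hK.pow_const (1 / r')).aemeasurable
        simpa using hh
    _ = a * (b * (∫⁻ ξ : ℝ, K ξ) ^ (1 / r')) := by
        congr 2
        · have hpt : ∀ ξ : ℝ, P ξ ^ r₁ =
              ENNReal.ofReal (jap ξ ^ (-((1 / r₁ + ε) * r₁))) := fun ξ => by
            simp only [hP_def]
            rw [ofReal_jap_rpow, neg_mul]
          rw [lintegral_congr hpt, hb_def, hB_def]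
        · refine congrArg (· ^ (1 / r')) (lintegral_congr fun ξ => ?_)
          rw [← ENNReal.rpow_mul, one_div_mul_cancel hr'0.ne', ENNReal.rpow_one]
    _ = ENNReal.ofReal (a * b).toReal * (∫⁻ q : ℝ × ℝ, F q) ^ (1 / r') := by
        rw [hofc, ← mul_assoc]
        have hT : (∫⁻ q : ℝ × ℝ, F q) = ∫⁻ ξ : ℝ, ∫⁻ τ : ℝ, F (ξ, τ) := by
          rw [MeasureTheory.Measure.volume_eq_prod, lintegral_prod _ hF.aemeasurable]
        rw [hT]
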